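/- For every n ≥ 5, the dual DP color function of the complete graph K_n satisfies P*_DP(K_n, 3)/3^n < P*_DP(K_n, 2)/2^n; that is, the Dual-DP Shameful (K_n, 2)-Inequality fails. -/

import Mathlib

open scoped Classical

/-- Number of proper `k`-colorings of `G` (the chromatic polynomial evaluated at `k`). -/
noncomputable def properCount {V : Type*} (G : SimpleGraph V) (k : ℕ) : ℕ :=
  Nat.card {f : V → Fin k // ∀ u v, G.Adj u v → f u ≠ f v}

/-- Number of proper `L`-colorings of `G` for a list assignment `L`. -/
noncomputable def listCount {V : Type*} (G : SimpleGraph V) (L : V → Finset ℕ) : ℕ :=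
  Nat.card {f : V → ℕ // (∀ v, f v ∈ L v) ∧ ∀ u v, G.Adj u v → f u ≠ f v}

/-- The list color function `P_ℓ(G, k)`. -/
noncomputable def listColorFn {V : Type*} (G : SimpleGraph V) (k : ℕ) : ℕ :=
  sInf {m | ∃ L : V → Finset ℕ, (∀ v, (L v).card = k) ∧ m = listCount G L}

/-- `H` (on vertex set `V × Fin k`, with `L v = {v} × Fin k`) is a `k`-fold DP-cover of `G`:
each part is a clique, cross-edges only between parts of adjacent vertices, and the
cross-edges between parts of adjacent vertices form a matching. -/
def IsDPCover {V : Type*} (G : SimpleGraph V) (k : ℕ) (H : SimpleGraph (V × Fin k)) : Prop :=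
  (∀ v : V, ∀ i j : Fin k, i ≠ j → H.Adj (v, i) (v, j)) ∧
  (∀ u v : V, ∀ i j : Fin k, H.Adj (u, i) (v, j) → u = v ∨ G.Adj u v) ∧
  (∀ u v : V, G.Adj u v →
    (∀ i j j' : Fin k, H.Adj (u, i) (v, j) → H.Adj (u, i) (v, j') → j = j') ∧
    (∀ i i' j : Fin k, H.Adj (u, i) (v, j) → H.Adj (u, i') (v, j) → i = i'))

/-- A full `k`-fold DP-cover: the matching between the parts of adjacent vertices is perfect. -/
def IsFullDPCover {V : Type*} (G : SimpleGraph V) (k : ℕ) (H : SimpleGraph (V × Fin k)) : Prop :=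
  IsDPCover G k H ∧ ∀ u v : V, G.Adj u v → ∀ i : Fin k, ∃! j : Fin k, H.Adj (u, i) (v, j)

/-- The number of `H`-colorings of `G` (independent sets of `H` with one vertex in each part,
encoded as functions `V → Fin k`). -/
noncomputable def dpCount {V : Type*} (k : ℕ) (H : SimpleGraph (V × Fin k)) : ℕ :=
  Nat.card {f : V → Fin k // ∀ u v : V, u ≠ v → ¬ H.Adj (u, f u) (v, f v)}

/-- The DP color function `P_DP(G, k)`. -/
noncomputable def dpColorFn {V : Type*} (G : SimpleGraph V) (k : ℕ) : ℕ :=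
  sInf {m | ∃ H : SimpleGraph (V × Fin k), IsDPCover G k H ∧ m = dpCount k H}

/-- The dual DP color function `P*_DP(G, k)`. -/
noncomputable def dualDPColorFn {V : Type*} (G : SimpleGraph V) (k : ℕ) : ℕ :=
  sSup {m | ∃ H : SimpleGraph (V × Fin k), IsFullDPCover G k H ∧ m = dpCount k H}


noncomputable def Sset {N : ℕ} (a b : Fin N → Fin N → Fin 2) (s : Finset (Fin N)) :
    Finset (Fin N → Fin 2) :=
  Finset.univ.filter (fun f => (∀ v, v ∉ s → f v = 0) ∧
    ∀ u ∈ s, ∀ v ∈ s, u ≠ v → ¬(f u = a u v ∧ f v = b u v))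

lemma fin2_eq_of_ne {x y b : Fin 2} (hx : x ≠ b) (hy : y ≠ b) : x = y := by
  fin_cases x <;> fin_cases y <;> fin_cases b <;> simp_all

lemma key {N : ℕ} (a b : Fin N → Fin N → Fin 2) (s : Finset (Fin N)) :
    (Sset a b s).card ≤ s.card + 1 := by
  induction s using Finset.strongInduction with
  | _ s ih =>
  rcases s.eq_empty_or_nonempty with rfl | ⟨u, hu⟩
  · have : Sset a b ∅ ⊆ {fun _ => 0} := by
      intro f hf
      simp only [Sset, Finset.mem_filter] at hf
      simp only [Finset.mem_singleton]
      funext v; exact hf.2.1 v (by simp)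
    simpa using Finset.card_le_card this
  · set A : Finset (Fin N) := (s.erase u).filter (fun v => a u v = 0) with hA
    set B : Finset (Fin N) := (s.erase u).filter (fun v => ¬ (a u v = 0)) with hB
    have hABcard : A.card + B.card = s.card - 1 := by
      rw [hA, hB, Finset.card_filter_add_card_filter_not, Finset.card_erase_of_mem hu]
    have hAs : A ⊂ s := by
      refine Finset.ssubset_iff_of_subset ?_ |>.mpr ⟨u, hu, ?_⟩
      · rw [hA]; exact (Finset.filter_subset _ _).trans (Finset.erase_subset _ _)
      · simp [hA]
    have hBs : B ⊂ s := by
      refine Finset.ssubset_iff_of_subset ?_ |>.mpr ⟨u, hu, ?_⟩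
      · rw [hB]; exact (Finset.filter_subset _ _).trans (Finset.erase_subset _ _)
      · simp [hB]
    -- split by value at u
    have hsplit : (Sset a b s).card =
        ((Sset a b s).filter (fun f => f u = 0)).card +
        ((Sset a b s).filter (fun f => ¬ (f u = 0))).card :=
      (Finset.card_filter_add_card_filter_not _).symm
    -- injection of S0 into Sset a b B
    have h0 : ((Sset a b s).filter (fun f => f u = 0)).card ≤ (Sset a b B).card := by
      apply Finset.card_le_card_of_injOn (fun f v => if v ∈ B then f v else 0)
      · intro f hf
        simp only [Sset, Finset.mem_coe, Finset.mem_filter, Finset.mem_univ, true_and] at hf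
        obtain ⟨⟨hf0, hfc⟩, hfu⟩ := hf
        simp only [Sset, Finset.mem_coe, Finset.mem_filter, Finset.mem_univ, true_and]
        constructor
        · intro v hv; simp [hv]
        · intro x hx y hy hxy
          have hxs : x ∈ s := (Finset.erase_subset _ _) ((Finset.filter_subset _ _) hx)
          have hys : y ∈ s := (Finset.erase_subset _ _) ((Finset.filter_subset _ _) hy)
          simpa [hx, hy] using hfc x hxs y hys hxy
      · intro f hf g hg hfg
        simp only [Finset.mem_coe, Finset.mem_filter] at hf hg
        obtain ⟨hfS, hfu⟩ := hf
        obtain ⟨hgS, hgu⟩ := hg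
        simp only [Sset, Finset.mem_filter] at hfS hgS
        funext v
        by_cases hvs : v ∈ s
        · by_cases hvu : v = u
          · rw [hvu, hfu, hgu]
          · by_cases hva : a u v = 0
            · -- forced value
              have hvA : v ∈ s.erase u := Finset.mem_erase.mpr ⟨hvu, hvs⟩
              have h1 : ¬(f u = a u v ∧ f v = b u v) := hfS.2.2 u hu v hvs (Ne.symm hvu)
              have h2 : ¬(g u = a u v ∧ g v = b u v) := hgS.2.2 u hu v hvs (Ne.symm hvu)
              have hf' : f v ≠ b u v := fun h => h1 ⟨by rw [hfu, hva], h⟩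
              have hg' : g v ≠ b u v := fun h => h2 ⟨by rw [hgu, hva], h⟩
              exact fin2_eq_of_ne hf' hg'
            · have hvB : v ∈ B := by
                rw [hB]; exact Finset.mem_filter.mpr ⟨Finset.mem_erase.mpr ⟨hvu, hvs⟩, hva⟩
              have := congrFun hfg v
              simpa [hvB] using this
        · rw [hfS.2.1 v hvs, hgS.2.1 v hvs]
    have h1 : ((Sset a b s).filter (fun f => ¬ (f u = 0))).card ≤ (Sset a b A).card := by
      apply Finset.card_le_card_of_injOn (fun f v => if v ∈ A then f v else 0)
      · intro f hf
        simp only [Sset, Finset.mem_coe, Finset.mem_filter, Finset.mem_univ, true_and] at hf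
        obtain ⟨⟨hf0, hfc⟩, hfu⟩ := hf
        simp only [Sset, Finset.mem_coe, Finset.mem_filter, Finset.mem_univ, true_and]
        constructor
        · intro v hv; simp [hv]
        · intro x hx y hy hxy
          have hxs : x ∈ s := (Finset.erase_subset _ _) ((Finset.filter_subset _ _) hx)
          have hys : y ∈ s := (Finset.erase_subset _ _) ((Finset.filter_subset _ _) hy)
          simpa [hx, hy] using hfc x hxs y hys hxy
      · intro f hf g hg hfg
        simp only [Finset.mem_coe, Finset.mem_filter] at hf hg
        obtain ⟨hfS, hfu⟩ := hf
        obtain ⟨hgS, hgu⟩ := hg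
        simp only [Sset, Finset.mem_filter] at hfS hgS
        have hfu1 : f u = 1 := fin2_eq_of_ne hfu (by decide)
        have hgu1 : g u = 1 := fin2_eq_of_ne hgu (by decide)
        funext v
        by_cases hvs : v ∈ s
        · by_cases hvu : v = u
          · rw [hvu, hfu1, hgu1]
          · by_cases hva : a u v = 0
            · have hvA : v ∈ A := by
                rw [hA]; exact Finset.mem_filter.mpr ⟨Finset.mem_erase.mpr ⟨hvu, hvs⟩, hva⟩
              have := congrFun hfg v
              simpa [hvA] using this
            · have hva1 : a u v = 1 := fin2_eq_of_ne hva (by decide)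
              have h1 : ¬(f u = a u v ∧ f v = b u v) := hfS.2.2 u hu v hvs (Ne.symm hvu)
              have h2 : ¬(g u = a u v ∧ g v = b u v) := hgS.2.2 u hu v hvs (Ne.symm hvu)
              have hf' : f v ≠ b u v := fun h => h1 ⟨by rw [hfu1, hva1], h⟩
              have hg' : g v ≠ b u v := fun h => h2 ⟨by rw [hgu1, hva1], h⟩
              exact fin2_eq_of_ne hf' hg'
        · rw [hfS.2.1 v hvs, hgS.2.1 v hvs]
    have ihA := ih A hAs
    have ihB := ih B hBs
    have hsc : 1 ≤ s.card := Finset.card_pos.mpr ⟨u, hu⟩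
    have h2 := Nat.add_le_add (h0.trans ihB) (h1.trans ihA)
    rw [hsplit]
    refine h2.trans ?_
    clear ih hsplit h0 h1 ihA ihB hA hB h2 hu
    omega

lemma upper3 (n : ℕ) (hn : 1 ≤ n) (H : SimpleGraph (Fin n × Fin 3))
    (hH : IsFullDPCover (⊤ : SimpleGraph (Fin n)) 3 H) : dpCount 3 H ≤ 3 * n := by
  set w : Fin n := ⟨0, hn⟩ with hw
  set P : (Fin n → Fin 3) → Prop :=
    fun f => ∀ u v : Fin n, u ≠ v → ¬ H.Adj (u, f u) (v, f v) with hP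
  have hcount : dpCount 3 H = (Finset.univ.filter P).card := by
    rw [dpCount, Nat.card_eq_fintype_card, Fintype.card_subtype]
  rw [hcount,
    Finset.card_eq_sum_card_fiberwise (f := fun f => f w) (t := Finset.univ)
      (fun x _ => Finset.mem_univ _)]
  have hfiber : ∀ i : Fin 3,
      ((Finset.univ.filter P).filter (fun f => f w = i)).card ≤ n := by
    intro i
    -- forbidden value F v : unique neighbor of (w, i) in part v
    have hF : ∀ v : Fin n, v ≠ w → ∃! j : Fin 3, H.Adj (w, i) (v, j) := by
      intro v hv
      exact hH.2 w v (by simp [Ne.symm hv]) i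
    set F : Fin n → Fin 3 :=
      fun v => if h : v ≠ w then (hF v h).choose else 0 with hFdef
    have hFadj : ∀ v : Fin n, (h : v ≠ w) → H.Adj (w, i) (v, F v) := by
      intro v h
      rw [hFdef]; simp only [dif_pos h]
      exact (hF v h).choose_spec.1
    set dec : Fin n → Fin 2 → Fin 3 := fun v t => (F v).succAbove t with hdec
    -- clause existence
    have hex : ∀ u v : Fin n, u ≠ w → v ≠ w → u ≠ v →
        ∃ p : Fin 2 × Fin 2, H.Adj (u, dec u p.1) (v, dec v p.2) := by
      intro u v hu hv huv
      have full := hH.2 u v (by simp [huv])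
      obtain ⟨j0, hj0, -⟩ := full (dec u 0)
      obtain ⟨j1, hj1, -⟩ := full (dec u 1)
      by_cases h0 : j0 = F v
      · have hne : j1 ≠ F v := by
          intro h1
          have heq : dec u 0 = dec u 1 :=
            (hH.1.2.2 u v (by simp [huv])).2 _ _ (F v) (h0 ▸ hj0) (h1 ▸ hj1)
          have := Fin.succAbove_right_injective (p := F u) heq
          exact absurd this (by decide)
        obtain ⟨y, hy⟩ := Fin.exists_succAbove_eq hne
        exact ⟨(1, y), by rw [hdec]; simpa [hy] using hj1⟩
      · obtain ⟨y, hy⟩ := Fin.exists_succAbove_eq h0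
        exact ⟨(0, y), by rw [hdec]; simpa [hy] using hj0⟩
    set c : Fin n → Fin n → Fin 2 × Fin 2 :=
      fun u v => if h : u ≠ w ∧ v ≠ w ∧ u ≠ v then
        Classical.choose (hex u v h.1 h.2.1 h.2.2) else 0 with hc
    have hcspec : ∀ u v : Fin n, u ≠ w → v ≠ w → u ≠ v →
        H.Adj (u, dec u (c u v).1) (v, dec v (c u v).2) := by
      intro u v hu hv huv
      rw [hc]; simp only [dif_pos (⟨hu, hv, huv⟩ : u ≠ w ∧ v ≠ w ∧ u ≠ v)]
      exact Classical.choose_spec (hex u v hu hv huv)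
    -- the encoding map
    set Φ : (Fin n → Fin 3) → (Fin n → Fin 2) :=
      fun f v => if h : v ≠ w ∧ ∃ t : Fin 2, dec v t = f v then h.2.choose else 0 with hΦ
    have henc : ∀ f : Fin n → Fin 3, P f → f w = i → ∀ v : Fin n, v ≠ w →
        ∃ t : Fin 2, dec v t = f v := by
      intro f hPf hfw v hv
      have hne : f v ≠ F v := by
        intro h
        have := hFadj v hv
        rw [← hfw, ← h] at this
        exact hPf w v (Ne.symm hv) this
      exact Fin.exists_succAbove_eq hne
    have hΦspec : ∀ f : Fin n → Fin 3, P f → f w = i → ∀ v : Fin n, v ≠ w →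
        dec v (Φ f v) = f v := by
      intro f hPf hfw v hv
      have hE := henc f hPf hfw v hv
      rw [hΦ]; simp only [dif_pos (⟨hv, hE⟩ : v ≠ w ∧ ∃ t, dec v t = f v)]
      exact hE.choose_spec
    have hinj : ((Finset.univ.filter P).filter (fun f => f w = i)).card ≤
        (Sset (fun u v => (c u v).1) (fun u v => (c u v).2) (Finset.univ.erase w)).card := by
      apply Finset.card_le_card_of_injOn Φ
      · intro f hf
        simp only [Finset.mem_coe, Finset.mem_filter, Finset.mem_univ, true_and] at hf
        obtain ⟨hPf, hfw⟩ := hf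
        simp only [Sset, Finset.mem_coe, Finset.mem_filter, Finset.mem_univ, true_and]
        constructor
        · intro v hv
          have hvw : v = w := by
            by_contra hvw
            exact hv (Finset.mem_erase.mpr ⟨hvw, Finset.mem_univ _⟩)
          rw [hΦ]
          simp [hvw]
        · intro x hx y hy hxy hcon
          have hxw : x ≠ w := (Finset.mem_erase.mp hx).1
          have hyw : y ≠ w := (Finset.mem_erase.mp hy).1
          have hadj := hcspec x y hxw hyw hxy
          rw [← hcon.1, ← hcon.2, hΦspec f hPf hfw x hxw, hΦspec f hPf hfw y hyw] at hadj
          exact hPf x y hxy hadj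
      · intro f hf g hg hfg
        simp only [Finset.coe_filter, Finset.mem_filter, Finset.mem_univ, true_and,
          Set.mem_setOf_eq] at hf hg
        obtain ⟨hPf, hfw⟩ := hf
        obtain ⟨hPg, hgw⟩ := hg
        funext v
        by_cases hv : v ≠ w
        · rw [← hΦspec f hPf hfw v hv, ← hΦspec g hPg hgw v hv, hfg]
        · push_neg at hv
          rw [hv, hfw, hgw]
    refine hinj.trans ((key _ _ _).trans ?_)
    rw [Finset.card_erase_of_mem (Finset.mem_univ _), Finset.card_univ, Fintype.card_fin]
    exact le_of_eq (Nat.succ_pred_eq_of_pos hn)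
  calc (∑ i : Fin 3, ((Finset.univ.filter P).filter (fun f => f w = i)).card)
      ≤ ∑ _i : Fin 3, n := Finset.sum_le_sum (fun i _ => hfiber i)
    _ = 3 * n := by simp [Finset.sum_const, mul_comm]

/-- the "all-swap" 2-fold cover: adjacency iff second coordinates differ. -/
def swapCover (n : ℕ) : SimpleGraph (Fin n × Fin 2) where
  Adj p q := p.2 ≠ q.2
  symm := ⟨fun p q h => Ne.symm h⟩
  loopless := ⟨fun p h => h rfl⟩

lemma swapCover_full (n : ℕ) : IsFullDPCover (⊤ : SimpleGraph (Fin n)) 2 (swapCover n) := by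
  refine ⟨⟨fun v i j h => h, fun u v i j h => by tauto, fun u v h => ?_⟩, fun u v h i => ?_⟩
  · constructor
    · intro i j j' hj hj'
      simp only [swapCover] at hj hj'
      fin_cases i <;> fin_cases j <;> fin_cases j' <;> simp_all
    · intro i i' j hi hi'
      simp only [swapCover] at hi hi'
      fin_cases i <;> fin_cases i' <;> fin_cases j <;> simp_all
  · refine ⟨i + 1, ?_, ?_⟩
    · show i ≠ i + 1
      fin_cases i <;> decide
    · intro j hj
      have h' : i ≠ j := hj
      revert h'
      fin_cases i <;> fin_cases j <;> decide

lemma swapCover_count (n : ℕ) (hn : 1 ≤ n) : dpCount 2 (swapCover n) = 2 := by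
  rw [dpCount]
  have e : {f : Fin n → Fin 2 // ∀ u v : Fin n, u ≠ v →
      ¬ (swapCover n).Adj (u, f u) (v, f v)} ≃ Fin 2 := by
    refine ⟨fun s => s.1 ⟨0, hn⟩, fun c => ⟨fun _ => c, fun u v h hadj => hadj rfl⟩, ?_, ?_⟩
    · intro ⟨f, hf⟩
      apply Subtype.ext
      funext v
      show f ⟨0, hn⟩ = f v
      by_cases hv : v = ⟨0, hn⟩
      · rw [hv]
      · by_contra hne
        exact hf v ⟨0, hn⟩ hv (Ne.symm hne)
    · intro c; rfl
  rw [Nat.card_congr e, Nat.card_eq_fintype_card, Fintype.card_fin]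

/-- the identity 3-fold cover, to show nonemptiness. -/
def idCover (n : ℕ) : SimpleGraph (Fin n × Fin 3) where
  Adj p q := p ≠ q ∧ p.2 = q.2 ∨ p.1 = q.1 ∧ p.2 ≠ q.2
  symm := ⟨by intro p q h; tauto⟩
  loopless := ⟨by intro p h; simp at h⟩

lemma idCover_full (n : ℕ) : IsFullDPCover (⊤ : SimpleGraph (Fin n)) 3 (idCover n) := by
  refine ⟨⟨fun v i j h => Or.inr ⟨rfl, h⟩, fun u v i j h => by tauto, fun u v h => ?_⟩,
    fun u v h i => ?_⟩
  · have huv : u ≠ v := by simpa using h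
    constructor
    · intro i j j' hj hj'
      simp only [idCover] at hj hj'
      rcases hj with ⟨-, h1⟩ | ⟨h1, -⟩ <;> rcases hj' with ⟨-, h2⟩ | ⟨h2, -⟩ <;>
        first | (exact h1.symm.trans h2) | (exact absurd h1 huv) | (exact absurd h2 huv)
    · intro i i' j hi hi'
      simp only [idCover] at hi hi'
      rcases hi with ⟨-, h1⟩ | ⟨h1, -⟩ <;> rcases hi' with ⟨-, h2⟩ | ⟨h2, -⟩ <;>
        first | (exact h1.trans h2.symm) | (exact absurd h1 huv) | (exact absurd h2 huv)
  · have huv : u ≠ v := by simpa using h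
    refine ⟨i, Or.inl ⟨by simp [huv], rfl⟩, ?_⟩
    intro j hj
    rcases hj with ⟨-, h1⟩ | ⟨h1, -⟩
    · exact h1.symm
    · exact absurd h1 huv

lemma dpCount_le (n k : ℕ) (H : SimpleGraph (Fin n × Fin k)) : dpCount k H ≤ k ^ n := by
  rw [dpCount]
  calc Nat.card {f : Fin n → Fin k // ∀ u v : Fin n, u ≠ v → ¬ H.Adj (u, f u) (v, f v)}
      ≤ Nat.card (Fin n → Fin k) :=
        Nat.card_le_card_of_injective _ Subtype.val_injective
    _ = k ^ n := by simp [Nat.card_eq_fintype_card]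

lemma lower2 (n : ℕ) (hn : 1 ≤ n) : 2 ≤ dualDPColorFn (⊤ : SimpleGraph (Fin n)) 2 := by
  rw [dualDPColorFn]
  apply le_csSup
  · exact ⟨2 ^ n, fun m hm => by obtain ⟨H, -, rfl⟩ := hm; exact dpCount_le n 2 H⟩
  · exact ⟨swapCover n, swapCover_full n, (swapCover_count n hn).symm⟩

lemma upperD3 (n : ℕ) (hn : 1 ≤ n) : dualDPColorFn (⊤ : SimpleGraph (Fin n)) 3 ≤ 3 * n := by
  rw [dualDPColorFn]
  apply csSup_le
  · exact ⟨dpCount 3 (idCover n), idCover n, idCover_full n, rfl⟩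
  · rintro m ⟨H, hH, rfl⟩
    exact upper3 n hn H hH

lemma numeric (n : ℕ) (hn : 5 ≤ n) : 3 * n * 2 ^ n < 2 * 3 ^ n := by
  induction n, hn using Nat.le_induction with
  | base => norm_num
  | succ m hm ih =>
    have h3 : 3 * 2 ^ m ≤ 3 ^ m := by
      have h3m : 3 ≤ m := by omega
      clear ih hm
      induction m, h3m using Nat.le_induction with
      | base => norm_num
      | succ p hp ih2 =>
        rw [pow_succ, pow_succ]
        calc 3 * (2 ^ p * 2) = (3 * 2 ^ p) * 2 := by ring
          _ ≤ 3 ^ p * 2 := by omega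
          _ ≤ 3 ^ p * 3 := by omega
    rw [pow_succ, pow_succ]
    nlinarith


theorem stmt7 (n : ℕ) (hn : 5 ≤ n) :
    (dualDPColorFn (⊤ : SimpleGraph (Fin n)) 3 : ℝ) / 3 ^ n <
      (dualDPColorFn (⊤ : SimpleGraph (Fin n)) 2 : ℝ) / 2 ^ n := by
  have h1 : (1 : ℕ) ≤ n := by omega
  have hu := upperD3 n h1
  have hl := lower2 n h1
  have hnum := numeric n hn
  have h2pos : (0 : ℝ) < 2 ^ n := by positivity
  have h3pos : (0 : ℝ) < 3 ^ n := by positivity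
  calc (dualDPColorFn (⊤ : SimpleGraph (Fin n)) 3 : ℝ) / 3 ^ n
      ≤ (3 * n : ℝ) / 3 ^ n := by
        gcongr
        exact_mod_cast hu
    _ < (2 : ℝ) / 2 ^ n := by
        rw [div_lt_div_iff₀ h3pos h2pos]
        have : (3 * n * 2 ^ n : ℝ) < 2 * 3 ^ n := by exact_mod_cast hnum
        linarith
    _ ≤ (dualDPColorFn (⊤ : SimpleGraph (Fin n)) 2 : ℝ) / 2 ^ n := by
        gcongr
        exact_mod_cast hl
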